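/- If θ is a nonempty shifted skew diagram that is a rook strip (i.e., containing at most one box in each row and at most one box in each column), then B(θ,1) = (-1)^{|θ|-1}. -/

import Mathlib

/-- `hcoef a b = Σ_{j=0}^{min(a,b)} (-1)^j 2^{a-j} binom(a,j)`; it is `0` when `b < 0`. -/
def hcoef (a : ℕ) (b : ℤ) : ℤ :=
  ∑ j ∈ Finset.range (a + 1),
    if (j : ℤ) ≤ b then (-1) ^ j * 2 ^ (a - j) * (a.choose j) else 0

attribute [local instance] Classical.propDecidable

/-- The south-east corners of a finite set of boxes: boxes `(i,j)` such that
neither `(i+1,j)` nor `(i,j+1)` belongs to the set. -/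
def seCorners (θ : Finset (ℤ × ℤ)) : Finset (ℤ × ℤ) :=
  θ.filter fun b => (b.1 + 1, b.2) ∉ θ ∧ (b.1, b.2 + 1) ∉ θ

/-- The south-east rim of `θ`: boxes `(i,j) ∈ θ` such that no box `(i',j') ∈ θ`
has `i' > i` and `j' > j`. -/
def seRim (θ : Finset (ℤ × ℤ)) : Finset (ℤ × ℤ) :=
  θ.filter fun b => ∀ b' ∈ θ, ¬ (b.1 < b'.1 ∧ b.2 < b'.2)

/-- `d(θ)`: the number of boxes in the south-east rim of `θ`. -/
def dRim (θ : Finset (ℤ × ℤ)) : ℕ := (seRim θ).card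

/-- `θ` is a rim if it equals its own south-east rim. -/
def IsRim (θ : Finset (ℤ × ℤ)) : Prop := θ = seRim θ

/-- Two boxes are adjacent (connected) if they share a side. -/
def Adjacent (b b' : ℤ × ℤ) : Prop := |b.1 - b'.1| + |b.2 - b'.2| = 1

/-- `b'` can be reached from `b` by a chain of adjacent boxes of `θ`. -/
def Reach (θ : Finset (ℤ × ℤ)) (b b' : ℤ × ℤ) : Prop :=
  Relation.ReflTransGen (fun x y => y ∈ θ ∧ Adjacent x y) b b'

/-- The connected components of `θ`. -/
noncomputable def comps (θ : Finset (ℤ × ℤ)) : Finset (Finset (ℤ × ℤ)) :=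
  θ.image fun b => θ.filter fun b' => Reach θ b b'

/-- `N(θ)`: the number of connected components of `θ`. -/
noncomputable def Ncomp (θ : Finset (ℤ × ℤ)) : ℕ := (comps θ).card

/-- `N⁻(θ) = max(N(θ) - 1, 0)`. -/
noncomputable def Nminus (θ : Finset (ℤ × ℤ)) : ℕ := Ncomp θ - 1

/-- `N'(θ)`: the number of connected components of `θ` containing no diagonal box. -/
noncomputable def Nprime (θ : Finset (ℤ × ℤ)) : ℕ :=
  ((comps θ).filter fun c => ∀ b ∈ c, b.1 ≠ b.2).card

/-- `B(θ,p) = Σ_S (-1)^{|S|} h(N⁻(θ∖S), d(θ∖S) - p)`, the sum over subsets `S`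
of the set of south-east corners of `θ`. -/
noncomputable def Bcoef (θ : Finset (ℤ × ℤ)) (p : ℤ) : ℤ :=
  ∑ S ∈ (seCorners θ).powerset,
    (-1) ^ S.card * hcoef (Nminus (θ \ S)) ((dRim (θ \ S) : ℤ) - p)

/-- `C(θ,p) = Σ_S (-1)^{|S|} h(N'(θ∖S), d(θ∖S) - p)`, the sum over subsets `S`
of the set of south-east corners of `θ`. -/
noncomputable def Ccoef (θ : Finset (ℤ × ℤ)) (p : ℤ) : ℤ :=
  ∑ S ∈ (seCorners θ).powerset,
    (-1) ^ S.card * hcoef (Nprime (θ \ S)) ((dRim (θ \ S) : ℤ) - p)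

/-- A strict partition with largest part at most `n`, encoded as a function
with `lam i = 0` for `i` beyond the length. -/
def IsStrictPartition (n : ℕ) (lam : ℤ → ℤ) : Prop :=
  lam 1 ≤ (n : ℤ) ∧ (∀ i : ℤ, 1 ≤ i → 0 ≤ lam i) ∧
  (∀ i : ℤ, 1 ≤ i → lam (i + 1) = 0 ∨ lam (i + 1) < lam i)

/-- The shifted Young diagram `{(i,j) : 1 ≤ i ≤ ℓ, i ≤ j ≤ λ_i + i - 1}` of a
strict partition. -/
noncomputable def shiftedD (n : ℕ) (lam : ℤ → ℤ) : Finset (ℤ × ℤ) :=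
  (Finset.Icc (1 : ℤ) (n : ℤ) ×ˢ Finset.Icc (1 : ℤ) (2 * (n : ℤ))).filter
    fun b => b.1 ≤ b.2 ∧ b.2 ≤ lam b.1 + b.1 - 1

/-- `θ` is a shifted skew diagram: `θ = ν/λ` for strict partitions `λ ⊆ ν`
with `ν_1 ≤ n`. -/
def IsShiftedSkewDiagram (n : ℕ) (θ : Finset (ℤ × ℤ)) : Prop :=
  ∃ lam nu : ℤ → ℤ, IsStrictPartition n lam ∧ IsStrictPartition n nu ∧
    (∀ i : ℤ, 1 ≤ i → lam i ≤ nu i) ∧ θ = shiftedD n nu \ shiftedD n lam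


/- auxiliary lemmas -/
section Aux

lemma mem_shiftedD {n : ℕ} {f : ℤ → ℤ} {i j : ℤ} :
    (i, j) ∈ shiftedD n f ↔
      ((1 ≤ i ∧ i ≤ (n : ℤ)) ∧ (1 ≤ j ∧ j ≤ 2 * (n : ℤ))) ∧ i ≤ j ∧ j ≤ f i + i - 1 := by
  simp [shiftedD, Finset.mem_filter, Finset.mem_product, Finset.mem_Icc, and_assoc]

lemma sp_le {n : ℕ} {nu : ℤ → ℤ} (h : IsStrictPartition n nu) :
    ∀ d : ℕ, ∀ i : ℤ, 1 ≤ i → 0 < nu (i + d + 1) →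
      nu (i + d + 1) + (i + d + 1) ≤ nu i + i := by
  intro d
  induction d with
  | zero =>
    intro i hi hpos
    simp only [Nat.cast_zero, add_zero] at hpos ⊢
    rcases h.2.2 i hi with h0 | hlt
    · rw [h0] at hpos; exact absurd hpos (by norm_num)
    · linarith
  | succ d ih =>
    intro i hi hpos
    have key : i + ((d : ℤ) + 1) + 1 = (i + 1) + d + 1 := by ring
    push_cast at hpos ⊢
    rw [key] at hpos ⊢
    have h1 := ih (i + 1) (by omega) hpos
    have h2 : 0 < nu (i + 1) := by linarith
    rcases h.2.2 i hi with h0 | hlt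
    · rw [h0] at h2; exact absurd h2 (by norm_num)
    · linarith

lemma adj_elim {b b' : ℤ × ℤ} (h : Adjacent b b') :
    (b.1 = b'.1 ∧ b.2 ≠ b'.2) ∨ (b.1 ≠ b'.1 ∧ b.2 = b'.2) := by
  unfold Adjacent at h
  rcases abs_cases (b.1 - b'.1) with ⟨h1, h1'⟩ | ⟨h1, h1'⟩ <;>
    rcases abs_cases (b.2 - b'.2) with ⟨h2, h2'⟩ | ⟨h2, h2'⟩ <;>
      rw [h1, h2] at h <;> omega

/-- A set is "scattered" if no two of its boxes share a row or a column. -/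
def Scattered (τ : Finset (ℤ × ℤ)) : Prop :=
  (∀ b ∈ τ, ∀ b' ∈ τ, b.1 = b'.1 → b = b') ∧
  (∀ b ∈ τ, ∀ b' ∈ τ, b.2 = b'.2 → b = b')

lemma scattered_no_adj {τ : Finset (ℤ × ℤ)} (h : Scattered τ) :
    ∀ b ∈ τ, ∀ b' ∈ τ, ¬ Adjacent b b' := by
  intro b hb b' hb' hadj
  rcases adj_elim hadj with ⟨h1, h2⟩ | ⟨h1, h2⟩
  · exact h2 (congrArg Prod.snd (h.1 b hb b' hb' h1))
  · exact h1 (congrArg Prod.fst (h.2 b hb b' hb' h2))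

lemma reach_eq {τ : Finset (ℤ × ℤ)} (h : Scattered τ) {b : ℤ × ℤ} (hb : b ∈ τ) :
    ∀ b', Reach τ b b' → b' = b := by
  intro b' hr
  induction hr with
  | refl => rfl
  | tail _ h2 ih =>
    exact absurd h2.2 (scattered_no_adj h _ (by rw [ih]; exact hb) _ h2.1)

lemma comps_scattered {τ : Finset (ℤ × ℤ)} (h : Scattered τ) :
    comps τ = τ.image fun b => ({b} : Finset (ℤ × ℤ)) := by
  unfold comps
  refine Finset.image_congr fun b hb => ?_
  simp only [Finset.mem_coe] at hb
  ext c
  simp only [Finset.mem_filter, Finset.mem_singleton]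
  constructor
  · rintro ⟨hc, hr⟩; exact reach_eq h hb c hr
  · rintro rfl; exact ⟨hb, Relation.ReflTransGen.refl⟩

lemma Ncomp_scattered {τ : Finset (ℤ × ℤ)} (h : Scattered τ) : Ncomp τ = τ.card := by
  rw [Ncomp, comps_scattered h,
    Finset.card_image_of_injective _ (fun a b hab => Finset.singleton_injective hab)]

lemma seRim_eq {τ : Finset (ℤ × ℤ)}
    (h : ∀ b ∈ τ, ∀ b' ∈ τ, ¬ (b.1 < b'.1 ∧ b.2 < b'.2)) : seRim τ = τ := by
  unfold seRim
  rw [Finset.filter_eq_self]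
  exact h

lemma hcoef_self (a : ℕ) : hcoef a (a : ℤ) = 1 := by
  have h := add_pow (-1 : ℤ) 2 a
  norm_num at h
  rw [hcoef, Finset.sum_congr rfl
    (fun j hj => if_pos (by exact_mod_cast Nat.le_of_lt_succ (Finset.mem_range.mp hj)))]
  rw [← h]

lemma hcoef_zero_neg : hcoef 0 (-1) = 0 := by
  simp [hcoef]

end Aux

lemma no_dom {n : ℕ} {θ : Finset (ℤ × ℤ)} (hθ : IsShiftedSkewDiagram n θ)
    (hrook : Scattered θ) :
    ∀ b ∈ θ, ∀ b' ∈ θ, ¬ (b.1 < b'.1 ∧ b.2 < b'.2) := by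
  obtain ⟨lam, nu, hlam, hnu, hle, rfl⟩ := hθ
  rintro ⟨i, j⟩ hb ⟨i', j'⟩ hb' ⟨h1, h2⟩
  simp only at h1 h2
  rw [Finset.mem_sdiff] at hb hb'
  obtain ⟨hbn, hbl⟩ := hb
  obtain ⟨hbn', hbl'⟩ := hb'
  rw [mem_shiftedD] at hbn hbn'
  obtain ⟨⟨hi, hj⟩, hij, hjn⟩ := hbn
  obtain ⟨⟨hi', hj'⟩, hij', hjn'⟩ := hbn'
  have hjl : lam i + i - 1 < j := by
    by_contra hc
    exact hbl (mem_shiftedD.mpr ⟨⟨hi, hj⟩, hij, by omega⟩)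
  have hnupos : 0 < nu i' := by omega
  have hd : ((i' - i - 1).toNat : ℤ) = i' - i - 1 := Int.toNat_of_nonneg (by omega)
  have hmono : nu i' + i' ≤ nu i + i := by
    have := sp_le hnu (i' - i - 1).toNat i hi.1
    rw [hd] at this
    have heq : i + (i' - i - 1) + 1 = i' := by ring
    rw [heq] at this
    exact this hnupos
  have hmem : ((i, j') : ℤ × ℤ) ∈ shiftedD n nu \ shiftedD n lam := by
    rw [Finset.mem_sdiff, mem_shiftedD, mem_shiftedD]
    refine ⟨⟨⟨hi, hj'⟩, by omega, by omega⟩, ?_⟩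
    rintro ⟨-, -, hc⟩
    omega
  have := hrook.1 (i, j) (Finset.mem_sdiff.mpr ⟨mem_shiftedD.mpr ⟨⟨hi, hj⟩, hij, hjn⟩, hbl⟩)
    (i, j') hmem rfl
  have : j = j' := congrArg Prod.snd this
  omega

/-- If `θ` is a nonempty shifted skew diagram that is a rook strip (at most one
box in each row and in each column), then `B(θ,1) = (-1)^{|θ|-1}`. -/
theorem Bcoef_one_of_rook_strip (n : ℕ) (hn : 0 < n) (θ : Finset (ℤ × ℤ))
    (hθ : IsShiftedSkewDiagram n θ) (hne : θ.Nonempty)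
    (hrook : (∀ b ∈ θ, ∀ b' ∈ θ, b.1 = b'.1 → b = b') ∧
             (∀ b ∈ θ, ∀ b' ∈ θ, b.2 = b'.2 → b = b')) :
    Bcoef θ 1 = (-1) ^ (θ.card - 1) := by
  have hsc : Scattered θ := hrook
  have hnd := no_dom hθ hsc
  have hcor : seCorners θ = θ := by
    unfold seCorners
    rw [Finset.filter_eq_self]
    intro b hb
    constructor
    · intro hmem
      have h := hsc.2 b hb _ hmem rfl
      have h2 : b.1 = b.1 + 1 := congrArg Prod.fst h
      omega
    · intro hmem
      have h := hsc.1 b hb _ hmem rfl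
      have h2 : b.2 = b.2 + 1 := congrArg Prod.snd h
      omega
  rw [Bcoef, hcor]
  have key : ∀ S ∈ θ.powerset,
      (-1:ℤ) ^ S.card * hcoef (Nminus (θ \ S)) ((dRim (θ \ S) : ℤ) - 1)
      = if S = θ then 0 else (-1) ^ S.card := by
    intro S hS
    have hSθ := Finset.mem_powerset.mp hS
    by_cases hSe : S = θ
    · subst hSe
      rw [Finset.sdiff_self, if_pos rfl]
      have h1 : Nminus ∅ = 0 := by simp [Nminus, Ncomp, comps]
      have h2 : dRim (∅ : Finset (ℤ × ℤ)) = 0 := by simp [dRim, seRim]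
      rw [h1, h2]
      norm_num [hcoef_zero_neg]
    · rw [if_neg hSe]
      set τ := θ \ S with hτ
      have hsub : τ ⊆ θ := Finset.sdiff_subset
      have hscτ : Scattered τ := ⟨fun b hb b' hb' => hsc.1 b (hsub hb) b' (hsub hb'),
                                  fun b hb b' hb' => hsc.2 b (hsub hb) b' (hsub hb')⟩
      have hndτ : ∀ b ∈ τ, ∀ b' ∈ τ, ¬ (b.1 < b'.1 ∧ b.2 < b'.2) :=
        fun b hb b' hb' => hnd b (hsub hb) b' (hsub hb')
      have hd : dRim τ = τ.card := by rw [dRim, seRim_eq hndτ]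
      have hN : Nminus τ = τ.card - 1 := by rw [Nminus, Ncomp_scattered hscτ]
      have hpos : 0 < τ.card := by
        rw [Finset.card_pos, hτ, Finset.sdiff_nonempty]
        exact fun hc => hSe (Finset.Subset.antisymm hSθ hc)
      have hcast : ((dRim τ : ℤ) - 1) = ((Nminus τ : ℕ) : ℤ) := by
        rw [hd, hN]; omega
      rw [hcast, hcoef_self, mul_one]
  rw [Finset.sum_congr rfl key]
  have hmem : θ ∈ θ.powerset := Finset.mem_powerset_self θ
  rw [← Finset.sum_erase_add _ _ hmem, if_pos rfl, add_zero]
  have herase : ∑ S ∈ θ.powerset.erase θ, (if S = θ then (0:ℤ) else (-1) ^ S.card)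
      = ∑ S ∈ θ.powerset.erase θ, (-1) ^ S.card :=
    Finset.sum_congr rfl fun S hS => if_neg (Finset.ne_of_mem_erase hS)
  rw [herase]
  have h0 : ∑ S ∈ θ.powerset, (-1:ℤ) ^ S.card = 0 :=
    Finset.sum_powerset_neg_one_pow_card_of_nonempty hne
  have hsplit := Finset.sum_erase_add θ.powerset (fun S => (-1:ℤ) ^ S.card) hmem
  rw [h0] at hsplit
  obtain ⟨t, ht⟩ : ∃ t, θ.card = t + 1 :=
    ⟨θ.card - 1, by have := Finset.card_pos.mpr hne; omega⟩
  have hval : ∑ S ∈ θ.powerset.erase θ, (-1:ℤ) ^ S.card = -(-1) ^ θ.card := by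
    linarith
  rw [hval, ht, Nat.add_sub_cancel]
  ring
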